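/- Let v be a sparse vertex (fewer than (1-ε)Δ friends), let c be a color, and let N_c(v) = {w ∈ N(v) : c ∈ Pal(w)} with |N_c(v)| ≥ (1-ε/2)Δ, where εΔ ≥ 3 and ε < 1/5. Let U be the set of ordered pairs (x,y) with x,y ∈ N_c(v), x < y, xy ∉ E. Then |U| ≥ (1/2)·(εΔ/2)·(εΔ/2 − 1); in particular |U| = Ω(ε²Δ²). -/

import Mathlib

open Finset

attribute [local instance] Classical.propDecidable

variable {V : Type*}

/-- `uv` is a friend edge: they are adjacent and share at least `(1-ε)Δ` neighbors. -/
def friendAdj [Fintype V] [DecidableEq V] (G : SimpleGraph V) [DecidableRel G.Adj]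
    (Δ : ℕ) (ε : ℝ) (u v : V) : Prop :=
  G.Adj u v ∧ (1 - ε) * (Δ : ℝ) ≤ ((G.neighborFinset u ∩ G.neighborFinset v).card : ℝ)

/-- The friends of `v`. -/
noncomputable def friends [Fintype V] [DecidableEq V] (G : SimpleGraph V) [DecidableRel G.Adj]
    (Δ : ℕ) (ε : ℝ) (v : V) : Finset V :=
  Finset.univ.filter (fun w => friendAdj G Δ ε v w)

/-- `v` is dense: it has at least `(1-ε)Δ` friends. -/
def isDense [Fintype V] [DecidableEq V] (G : SimpleGraph V) [DecidableRel G.Adj]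
    (Δ : ℕ) (ε : ℝ) (v : V) : Prop :=
  (1 - ε) * (Δ : ℝ) ≤ ((friends G Δ ε v).card : ℝ)

/-- The graph on dense vertices whose edges are the friend edges; its connected
components are the almost-cliques. -/
def friendGraph [Fintype V] [DecidableEq V] (G : SimpleGraph V) [DecidableRel G.Adj]
    (Δ : ℕ) (ε : ℝ) : SimpleGraph V where
  Adj u v := friendAdj G Δ ε u v ∧ isDense G Δ ε u ∧ isDense G Δ ε v
  symm := ⟨by
    rintro u v ⟨⟨hadj, hcard⟩, hu, hv⟩
    exact ⟨⟨hadj.symm, by rwa [Finset.inter_comm]⟩, hv, hu⟩⟩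
  loopless := ⟨fun v h => G.irrefl h.1.1⟩

/-- For a sparse vertex `v` and a color `c` with `|N_c(v)| ≥ (1-ε/2)Δ`, `εΔ ≥ 3`,
`ε < 1/5`, the set `U` of ordered pairs `(x,y)` with `x,y ∈ N_c(v)`, `x < y`, `xy ∉ E`
satisfies `|U| ≥ (1/2)·(εΔ/2)·(εΔ/2 - 1) = Ω(ε²Δ²)`. -/
theorem stmt_14 {C : Type*} [Fintype V] [DecidableEq V] [LinearOrder V] [DecidableEq C]
    (G : SimpleGraph V) [DecidableRel G.Adj]
    (Δ : ℕ) (ε : ℝ) (hΔ : ∀ w, G.degree w ≤ Δ)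
    (hε0 : 0 < ε) (hε : ε < 1/5) (hεΔ : 3 ≤ ε * (Δ : ℝ))
    (Pal : V → Finset C) (c : C) (v : V)
    (hsparse : ¬ isDense G Δ ε v) :
    let Nc := (G.neighborFinset v).filter (fun w => c ∈ Pal w)
    (1 - ε/2) * (Δ : ℝ) ≤ (Nc.card : ℝ) →
    (1/2) * (ε * (Δ : ℝ)/2) * (ε * (Δ : ℝ)/2 - 1) ≤
      (((Nc ×ˢ Nc).filter (fun p => p.1 < p.2 ∧ ¬ G.Adj p.1 p.2)).card : ℝ) := by
  intro Nc hNc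
  classical
  set U := (Nc ×ˢ Nc).filter (fun p => p.1 < p.2 ∧ ¬ G.Adj p.1 p.2) with hUdef
  set W := Nc.filter (fun w => ¬ friendAdj G Δ ε v w) with hWdef
  have hNcsub : Nc ⊆ G.neighborFinset v := Finset.filter_subset _ _
  -- |W| ≥ εΔ/2
  have hWcard : ε * (Δ : ℝ) / 2 ≤ (W.card : ℝ) := by
    have h1 : Nc.filter (fun w => friendAdj G Δ ε v w) ⊆ friends G Δ ε v := by
      intro w hw
      simp only [friends, Finset.mem_filter, Finset.mem_univ, true_and]
      exact (Finset.mem_filter.mp hw).2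
    have h2 : (Nc.filter (fun w => friendAdj G Δ ε v w)).card + W.card = Nc.card :=
      Finset.card_filter_add_card_filter_not _
    have h3 : ((friends G Δ ε v).card : ℝ) < (1 - ε) * Δ := by
      simp only [isDense, not_le] at hsparse
      exact hsparse
    have h4 : ((Nc.filter (fun w => friendAdj G Δ ε v w)).card : ℝ)
        ≤ ((friends G Δ ε v).card : ℝ) := by
      exact_mod_cast Finset.card_le_card h1
    have h5 : ((Nc.filter (fun w => friendAdj G Δ ε v w)).card : ℝ) + (W.card : ℝ)
        = (Nc.card : ℝ) := by exact_mod_cast congrArg (Nat.cast : ℕ → ℝ) h2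
    linarith
  -- non-neighbors of w within Nc
  set A : V → Finset V := fun w => Nc \ (G.neighborFinset w ∪ {w}) with hAdef
  have hA : ∀ w ∈ W, ε * (Δ : ℝ) / 2 - 1 ≤ ((A w).card : ℝ) := by
    intro w hw
    obtain ⟨hwNc, hwnf⟩ := Finset.mem_filter.mp hw
    have hadj : G.Adj v w := by
      have := hNcsub hwNc
      rwa [SimpleGraph.mem_neighborFinset] at this
    have hinter : ((G.neighborFinset v ∩ G.neighborFinset w).card : ℝ) < (1 - ε) * Δ := by
      by_contra h
      push_neg at h
      exact hwnf ⟨hadj, h⟩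
    have hcover : Nc ⊆ A w ∪ ((G.neighborFinset v ∩ G.neighborFinset w) ∪ {w}) := by
      intro x hx
      by_cases hxA : x ∈ A w
      · exact Finset.mem_union_left _ hxA
      · simp only [hAdef, Finset.mem_sdiff, hx, true_and, not_not] at hxA
        rcases Finset.mem_union.mp hxA with h | h
        · exact Finset.mem_union_right _ (Finset.mem_union_left _
            (Finset.mem_inter.mpr ⟨hNcsub hx, h⟩))
        · exact Finset.mem_union_right _ (Finset.mem_union_right _ h)
    have hcard : Nc.card ≤ (A w).card
        + ((G.neighborFinset v ∩ G.neighborFinset w).card + 1) := by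
      calc Nc.card ≤ (A w ∪ ((G.neighborFinset v ∩ G.neighborFinset w) ∪ {w})).card :=
            Finset.card_le_card hcover
        _ ≤ (A w).card + ((G.neighborFinset v ∩ G.neighborFinset w) ∪ {w}).card :=
            Finset.card_union_le _ _
        _ ≤ (A w).card + ((G.neighborFinset v ∩ G.neighborFinset w).card + 1) := by
            have := Finset.card_union_le (G.neighborFinset v ∩ G.neighborFinset w)
              ({w} : Finset V)
            simpa using Nat.add_le_add_left this _
    have hcardR : (Nc.card : ℝ) ≤ ((A w).card : ℝ)
        + (((G.neighborFinset v ∩ G.neighborFinset w).card : ℝ) + 1) := by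
      exact_mod_cast hcard
    linarith
  -- the ordered pair set S injecting into the non-adjacent ordered pairs
  set T := (Nc ×ˢ Nc).filter (fun p => p.1 ≠ p.2 ∧ ¬ G.Adj p.1 p.2) with hTdef
  set S := W.biUnion (fun w => (A w).image (fun x => (w, x))) with hSdef
  have hScard : S.card = ∑ w ∈ W, (A w).card := by
    rw [hSdef, Finset.card_biUnion]
    · refine Finset.sum_congr rfl (fun w _ => ?_)
      exact Finset.card_image_of_injective _ (fun a b h => by
        simpa using congrArg Prod.snd h)
    · intro a _ b _ hab
      simp only [Finset.disjoint_left, Finset.mem_image]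
      rintro ⟨x, y⟩ ⟨x1, _, h1⟩ ⟨x2, _, h2⟩
      exact hab ((Prod.ext_iff.mp h1).1.trans (Prod.ext_iff.mp h2).1.symm)
  have hST : S ⊆ T := by
    intro p hp
    simp only [hSdef, Finset.mem_biUnion, Finset.mem_image] at hp
    obtain ⟨w, hw, x, hx, rfl⟩ := hp
    have hwNc : w ∈ Nc := (Finset.mem_filter.mp hw).1
    simp only [hAdef, Finset.mem_sdiff, Finset.mem_union, Finset.mem_singleton,
      SimpleGraph.mem_neighborFinset, not_or] at hx
    obtain ⟨hxNc, hnadj, hne⟩ := hx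
    simp only [hTdef, Finset.mem_filter, Finset.mem_product]
    exact ⟨⟨hwNc, hxNc⟩, fun h => hne h.symm, hnadj⟩
  -- T has twice the cardinality of U
  set U' := (Nc ×ˢ Nc).filter (fun p => p.2 < p.1 ∧ ¬ G.Adj p.1 p.2) with hU'def
  have hUU' : U'.card = U.card := by
    apply Finset.card_bij (fun p _ => (p.2, p.1))
    · rintro ⟨x, y⟩ hp
      simp only [hU'def, Finset.mem_filter, Finset.mem_product] at hp
      simp only [hUdef, Finset.mem_filter, Finset.mem_product]
      exact ⟨⟨hp.1.2, hp.1.1⟩, hp.2.1, fun h => hp.2.2 h.symm⟩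
    · rintro ⟨x, y⟩ _ ⟨x', y'⟩ _ h
      have h1 := congrArg Prod.fst h
      have h2 := congrArg Prod.snd h
      simp only at h1 h2
      simp [Prod.ext_iff, h1, h2]
    · rintro ⟨x, y⟩ hp
      refine ⟨(y, x), ?_, rfl⟩
      simp only [hUdef, Finset.mem_filter, Finset.mem_product] at hp
      simp only [hU'def, Finset.mem_filter, Finset.mem_product]
      exact ⟨⟨hp.1.2, hp.1.1⟩, hp.2.1, fun h => hp.2.2 h.symm⟩
  have hTsplit : T = U ∪ U' := by
    ext ⟨x, y⟩
    simp only [hTdef, hUdef, hU'def, Finset.mem_filter, Finset.mem_union, Finset.mem_product]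
    constructor
    · rintro ⟨hm, hne, hna⟩
      rcases lt_or_gt_of_ne hne with h | h
      · exact Or.inl ⟨hm, h, hna⟩
      · exact Or.inr ⟨hm, h, hna⟩
    · rintro (⟨hm, h, hna⟩ | ⟨hm, h, hna⟩)
      · exact ⟨hm, ne_of_lt h, hna⟩
      · exact ⟨hm, (ne_of_lt h).symm, hna⟩
  have hdisj : Disjoint U U' := by
    rw [Finset.disjoint_left]
    rintro ⟨x, y⟩ hp hq
    simp only [hUdef, Finset.mem_filter] at hp
    simp only [hU'def, Finset.mem_filter] at hq
    exact absurd hp.2.1 (not_lt_of_gt hq.2.1)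
  have hTcard : T.card = 2 * U.card := by
    rw [hTsplit, Finset.card_union_of_disjoint hdisj, hUU']
    ring
  -- put it together
  have hsum : (W.card : ℝ) * (ε * (Δ : ℝ) / 2 - 1) ≤ ∑ w ∈ W, ((A w).card : ℝ) := by
    have := Finset.card_nsmul_le_sum W (fun w => ((A w).card : ℝ))
      (ε * (Δ : ℝ) / 2 - 1) (fun w hw => hA w hw)
    simpa [nsmul_eq_mul] using this
  have hsum2 : (∑ w ∈ W, ((A w).card : ℝ)) = (S.card : ℝ) := by
    rw [hScard]; push_cast; ring
  have hTle : (S.card : ℝ) ≤ (T.card : ℝ) := by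
    exact_mod_cast Finset.card_le_card hST
  have hTU : (T.card : ℝ) = 2 * (U.card : ℝ) := by exact_mod_cast hTcard
  have hpos : (0 : ℝ) ≤ ε * (Δ : ℝ) / 2 - 1 := by linarith
  have hWlow : ε * (Δ : ℝ) / 2 * (ε * (Δ : ℝ) / 2 - 1)
      ≤ (W.card : ℝ) * (ε * (Δ : ℝ) / 2 - 1) :=
    mul_le_mul_of_nonneg_right hWcard hpos
  have final : (1/2) * (ε * (Δ : ℝ)/2) * (ε * (Δ : ℝ)/2 - 1) ≤ (U.card : ℝ) := by
    linarith
  convert final using 4
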